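/- Let B be drawn from LRR(n, 2). There exists a sequence ε_n → 0 such that for every n and every k > n/3, E[|N(G_k)|] ≤ (1 + ε_n) · (n/3 + k). -/

import Mathlib

open Finset

/-- One step of the greedy algorithm on the bipartite graph whose left nodes are
`Fin n`, right nodes are `Fin m`, and whose neighborhoods are given by `N`.
It adds to the current solution `S` the left node with largest marginal
coverage `|N(u) \ N(S)|`, breaking ties by smallest index. -/
noncomputable def greedyStep {n m : ℕ} (N : Fin n → Finset (Fin m))
    (S : Finset (Fin n)) : Finset (Fin n) :=
  if h : (Finset.univ \ S).Nonempty then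
    insert
      (((Finset.univ \ S).filter fun u =>
          ((N u) \ S.biUnion N).card =
            (Finset.univ \ S).sup fun v => ((N v) \ S.biUnion N).card).min'
        (by
          obtain ⟨u, hu, hsup⟩ :=
            Finset.exists_mem_eq_sup (Finset.univ \ S) h
              (fun v => ((N v) \ S.biUnion N).card)
          exact ⟨u, Finset.mem_filter.mpr ⟨hu, hsup.symm⟩⟩))
      S
  else S

/-- The greedy solution after `k` iterations (`greedy N 0 = ∅`). -/
noncomputable def greedy {n m : ℕ} (N : Fin n → Finset (Fin m)) : ℕ → Finset (Fin n)
  | 0 => ∅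
  | k + 1 => greedyStep N (greedy N k)

/-- The coverage `|N(O_k)|` of an optimal solution with cardinality constraint `k`. -/
def optValue {n m : ℕ} (N : Fin n → Finset (Fin m)) (k : ℕ) : ℕ :=
  (Finset.univ.powerset.filter fun S : Finset (Fin n) => S.card ≤ k).sup
    fun S => (S.biUnion N).card

/-- The sample space of the left-regular random model `LRR(n, d)`: all
neighborhood maps in which every left node has exactly `d` of the `n` right
nodes as neighbors. -/
def lrrGraphs (n d : ℕ) : Finset (Fin n → Finset (Fin n)) :=
  Finset.univ.filter fun N => ∀ i, (N i).card = d

/-- Expectation of `f` under the left-regular random model `LRR(n, d)`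
(uniform distribution on `lrrGraphs n d`). -/
noncomputable def lrrExp (n d : ℕ) (f : (Fin n → Finset (Fin n)) → ℝ) : ℝ :=
  (∑ N ∈ lrrGraphs n d, f N) / (lrrGraphs n d).card

open scoped Classical in
/-- Probability of the event `p` under the left-regular random model `LRR(n, d)`. -/
noncomputable def lrrProb (n d : ℕ) (p : (Fin n → Finset (Fin n)) → Prop) : ℝ :=
  ((lrrGraphs n d).filter p).card / (lrrGraphs n d).card

section Det

variable {n m : ℕ} (N : Fin n → Finset (Fin m))

lemma biUnion_mono' {S T : Finset (Fin n)} (h : S ⊆ T) : S.biUnion N ⊆ T.biUnion N :=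
  Finset.biUnion_subset_biUnion_of_subset_left _ h

lemma greedyStep_spec (S : Finset (Fin n)) (h : (Finset.univ \ S).Nonempty) :
    ∃ u, u ∈ Finset.univ \ S ∧
      ((N u) \ S.biUnion N).card
        = ((Finset.univ \ S).sup fun v => ((N v) \ S.biUnion N).card) ∧
      greedyStep N S = insert u S ∧
      (∀ w ∈ Finset.univ \ S,
        ((N w) \ S.biUnion N).card
          = ((Finset.univ \ S).sup fun v => ((N v) \ S.biUnion N).card) → u ≤ w) := by
  rw [greedyStep, dif_pos h]
  set T := (Finset.univ \ S).filter fun u =>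
      ((N u) \ S.biUnion N).card
        = (Finset.univ \ S).sup fun v => ((N v) \ S.biUnion N).card with hT
  have hTne : T.Nonempty := by
    obtain ⟨u, hu, hsup⟩ :=
      Finset.exists_mem_eq_sup (Finset.univ \ S) h
        (fun v => ((N v) \ S.biUnion N).card)
    exact ⟨u, Finset.mem_filter.mpr ⟨hu, hsup.symm⟩⟩
  have hmem := Finset.min'_mem T hTne
  rw [Finset.mem_filter] at hmem
  refine ⟨T.min' hTne, hmem.1, hmem.2, rfl, fun w hw hsw => ?_⟩
  exact Finset.min'_le T w (Finset.mem_filter.mpr ⟨hw, hsw⟩)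

lemma subset_greedyStep (S : Finset (Fin n)) : S ⊆ greedyStep N S := by
  rw [greedyStep]
  split_ifs
  · exact Finset.subset_insert _ _
  · exact Finset.Subset.refl _

lemma greedy_subset_greedy {k l : ℕ} (h : k ≤ l) : greedy N k ⊆ greedy N l := by
  induction l with
  | zero => simp [Nat.le_zero.mp h]
  | succ l ih =>
    rcases Nat.lt_or_ge k (l+1) with hk | hk
    · exact (ih (Nat.lt_succ_iff.mp hk)).trans (subset_greedyStep N _)
    · have : k = l + 1 := le_antisymm h hk
      subst this; exact Finset.Subset.refl _

lemma card_greedy_le (k : ℕ) : (greedy N k).card ≤ k := by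
  induction k with
  | zero => simp [greedy]
  | succ k ih =>
    show (greedyStep N (greedy N k)).card ≤ k + 1
    rw [greedyStep]
    split_ifs
    · exact le_trans (Finset.card_insert_le _ _) (by omega)
    · omega

lemma card_cov_insert (S : Finset (Fin n)) (u : Fin n) :
    ((insert u S).biUnion N).card = ((N u) \ S.biUnion N).card + (S.biUnion N).card := by
  rw [Finset.biUnion_insert, ← Finset.card_sdiff_add_card]

lemma gain_le_one {u : Fin n} {X : Finset (Fin m)} (h2 : (N u).card = 2)
    (hd : ¬ Disjoint (N u) X) : ((N u) \ X).card ≤ 1 := by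
  by_contra hc
  push_neg at hc
  have hss : (N u) \ X ⊂ N u := by
    refine Finset.ssubset_iff_subset_ne.mpr ⟨Finset.sdiff_subset, ?_⟩
    intro he
    exact hd (Finset.sdiff_eq_self_iff_disjoint.mp he)
  have := Finset.card_lt_card hss
  omega

open scoped Classical in
noncomputable def seqA : ℕ → Finset (Fin n)
  | 0 => ∅
  | i + 1 =>
    if h : i < n then
      if Disjoint (N ⟨i, h⟩) ((seqA i).biUnion N) then insert ⟨i, h⟩ (seqA i)
      else seqA i
    else seqA i

lemma seqA_lt (i : ℕ) : ∀ j ∈ seqA N i, (j : ℕ) < i := by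
  induction i with
  | zero => simp [seqA]
  | succ i ih =>
    intro j hj
    rw [seqA] at hj
    split_ifs at hj with h1 h2
    · rcases Finset.mem_insert.mp hj with rfl | hj
      · simp
      · exact Nat.lt_succ_of_lt (ih j hj)
    · exact Nat.lt_succ_of_lt (ih j hj)
    · exact Nat.lt_succ_of_lt (ih j hj)

lemma seqA_self_not_mem {i : ℕ} (h : i < n) : (⟨i, h⟩ : Fin n) ∉ seqA N i :=
  fun hc => by have := seqA_lt N i _ hc; simp at this

lemma seqA_succ_subset (i : ℕ) : seqA N i ⊆ seqA N (i + 1) := by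
  conv_rhs => rw [seqA]
  split_ifs
  · exact Finset.subset_insert _ _
  · exact Finset.Subset.refl _
  · exact Finset.Subset.refl _

lemma seqA_mono {i i' : ℕ} (h : i ≤ i') : seqA N i ⊆ seqA N i' := by
  induction i' with
  | zero => simp [Nat.le_zero.mp h]
  | succ i' ih =>
    rcases Nat.lt_or_ge i (i'+1) with hk | hk
    · exact (ih (Nat.lt_succ_iff.mp hk)).trans (seqA_succ_subset N i')
    · have : i = i' + 1 := le_antisymm h hk
      subst this; exact Finset.Subset.refl _

lemma seqA_blocked {i : ℕ} {u : Fin n} (hu : (u : ℕ) < i) (hni : u ∉ seqA N i) :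
    ¬ Disjoint (N u) ((seqA N i).biUnion N) := by
  have hstep : u ∉ seqA N ((u : ℕ) + 1) := fun hc => hni (seqA_mono N hu hc)
  have hd : ¬ Disjoint (N u) ((seqA N (u : ℕ)).biUnion N) := by
    intro hd
    apply hstep
    rw [seqA, dif_pos u.isLt, if_pos (by simpa [Fin.eta] using hd)]
    exact Finset.mem_insert.mpr (Or.inl (by simp [Fin.eta]))
  intro hd'
  exact hd (hd'.mono_right (Finset.biUnion_subset_biUnion_of_subset_left _
    (seqA_mono N hu.le)))

lemma card_cov_seqA (h2 : ∀ i, (N i).card = 2) (i : ℕ) :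
    ((seqA N i).biUnion N).card = 2 * (seqA N i).card := by
  induction i with
  | zero => simp [seqA]
  | succ i ih =>
    rw [seqA]
    split_ifs with h1 hdis
    · rw [Finset.biUnion_insert, Finset.card_union_of_disjoint hdis,
        Finset.card_insert_of_notMem (seqA_self_not_mem N h1), h2, ih]
      ring
    · exact ih
    · exact ih

lemma greedy_seqA (h2 : ∀ i, (N i).card = 2) :
    ∀ i, i ≤ n → greedy N ((seqA N i).card) = seqA N i := by
  intro i
  induction i with
  | zero => intro _; simp [seqA, greedy]
  | succ i ih =>
    intro hi
    have hin : i < n := hi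
    have IH := ih (le_of_lt hin)
    have hnot := seqA_self_not_mem N hin
    by_cases hdis : Disjoint (N ⟨i, hin⟩) ((seqA N i).biUnion N)
    · have heq : seqA N (i+1) = insert ⟨i, hin⟩ (seqA N i) := by
        rw [seqA, dif_pos hin, if_pos hdis]
      rw [heq, Finset.card_insert_of_notMem hnot]
      show greedyStep N (greedy N ((seqA N i).card)) = _
      rw [IH]
      have hne : (Finset.univ \ seqA N i).Nonempty :=
        ⟨⟨i, hin⟩, Finset.mem_sdiff.mpr ⟨Finset.mem_univ _, hnot⟩⟩
      obtain ⟨u, humem, hugain, hstep, humin⟩ := greedyStep_spec N _ hne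
      rw [hstep]
      suffices hui : u = ⟨i, hin⟩ by rw [hui]
      have hNi : (N ⟨i, hin⟩) \ (seqA N i).biUnion N = N ⟨i, hin⟩ :=
        Finset.sdiff_eq_self_iff_disjoint.mpr hdis
      have hsup2 : ((Finset.univ \ seqA N i).sup
          fun v => ((N v) \ (seqA N i).biUnion N).card) = 2 := by
        apply le_antisymm
        · exact Finset.sup_le fun v _ =>
            le_trans (Finset.card_le_card Finset.sdiff_subset) (le_of_eq (h2 v))
        · calc 2 = ((N ⟨i, hin⟩) \ (seqA N i).biUnion N).card := by rw [hNi, h2]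
            _ ≤ _ := Finset.le_sup (f := fun v => ((N v) \ (seqA N i).biUnion N).card)
                (Finset.mem_sdiff.mpr ⟨Finset.mem_univ _, hnot⟩)
      have hle : u ≤ ⟨i, hin⟩ :=
        humin _ (Finset.mem_sdiff.mpr ⟨Finset.mem_univ _, hnot⟩) (by rw [hNi, h2, hsup2])
      rcases eq_or_lt_of_le hle with he | hlt
      · exact he
      · exfalso
        have huval : (u : ℕ) < i := hlt
        have hun : u ∉ seqA N i := (Finset.mem_sdiff.mp humem).2
        have hb := seqA_blocked N huval hun
        have hle1 := gain_le_one N (h2 u) hb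
        rw [hugain, hsup2] at hle1
        omega
    · have heq : seqA N (i+1) = seqA N i := by
        rw [seqA, dif_pos hin, if_neg hdis]
      rw [heq]
      exact IH

lemma cov_step_le (h2 : ∀ i, (N i).card = 2) {S : Finset (Fin n)} (hS : seqA N n ⊆ S) :
    ((greedyStep N S).biUnion N).card ≤ (S.biUnion N).card + 1 := by
  by_cases h : (Finset.univ \ S).Nonempty
  · obtain ⟨u, humem, hugain, hstep, _⟩ := greedyStep_spec N S h
    rw [hstep, card_cov_insert]
    have hsup_le : ((Finset.univ \ S).sup fun v => ((N v) \ S.biUnion N).card) ≤ 1 := by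
      apply Finset.sup_le
      intro v hv
      have hvn : v ∉ S := (Finset.mem_sdiff.mp hv).2
      have hvA : v ∉ seqA N n := fun hc => hvn (hS hc)
      have hb := seqA_blocked N v.isLt hvA
      have hb' : ¬ Disjoint (N v) (S.biUnion N) :=
        fun hd => hb (hd.mono_right (biUnion_mono' N hS))
      exact gain_le_one N (h2 v) hb'
    rw [hugain]
    omega
  · rw [greedyStep, dif_neg h]
    omega

lemma det_main (h2 : ∀ i, (N i).card = 2) (k : ℕ) :
    ((greedy N k).biUnion N).card ≤ k + (seqA N n).card := by
  set a := (seqA N n).card with ha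
  rcases le_or_gt k a with hk | hk
  · have h1 : ((greedy N k).biUnion N).card ≤ 2 * k := by
      calc ((greedy N k).biUnion N).card ≤ ∑ u ∈ greedy N k, (N u).card :=
            Finset.card_biUnion_le
        _ = 2 * (greedy N k).card := by
            rw [Finset.sum_congr rfl fun u _ => h2 u, Finset.sum_const, smul_eq_mul, mul_comm]
        _ ≤ 2 * k := by have := card_greedy_le N k; omega
    omega
  · have key : ∀ j, ((greedy N (a + j)).biUnion N).card ≤ 2 * a + j := by
      intro j
      induction j with
      | zero =>
        rw [Nat.add_zero, ha, greedy_seqA N h2 n (le_refl n), card_cov_seqA N h2]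
        omega
      | succ j ihj =>
        have hsub : seqA N n ⊆ greedy N (a + j) := by
          rw [← greedy_seqA N h2 n (le_refl n)]
          exact greedy_subset_greedy N (Nat.le_add_right a j)
        have hstep := cov_step_le N h2 hsub
        have hg : greedy N (a + (j+1)) = greedyStep N (greedy N (a + j)) := rfl
        rw [hg]
        omega
    have hkey := key (k - a)
    have hka : a + (k - a) = k := Nat.add_sub_cancel' hk.le
    rw [hka] at hkey
    omega

end Det


def procStep {m : ℕ} (f e : Finset (Fin m)) : Finset (Fin m) :=
  if e ⊆ f then f \ e else f

def procF {m : ℕ} : (M : ℕ) → (Fin M → Finset (Fin m)) → Finset (Fin m) → Finset (Fin m)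
  | 0, _, f => f
  | M + 1, E, f => procStep (procF M (fun j => E j.castSucc) f) (E (Fin.last M))

section EdgeSum
variable {m : ℕ}

lemma filter_subset_eq (f : Finset (Fin m)) :
    (Finset.powersetCard 2 (Finset.univ : Finset (Fin m))).filter (fun e => e ⊆ f)
      = Finset.powersetCard 2 f := by
  ext e
  simp [Finset.mem_powersetCard, Finset.mem_powersetCard_univ, and_comm]

lemma edge_sum (f : Finset (Fin m)) :
    ∑ e ∈ Finset.powersetCard 2 (Finset.univ : Finset (Fin m)),
        (1 : ℝ) / (((procStep f e).card : ℝ) + 1)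
      ≤ ((Finset.powersetCard 2 (Finset.univ : Finset (Fin m))).card : ℝ)
          * (1 / ((f.card : ℝ) + 1)) + 1 := by
  classical
  set P := Finset.powersetCard 2 (Finset.univ : Finset (Fin m)) with hPdef
  rw [← Finset.sum_filter_add_sum_filter_not P (fun e => e ⊆ f)]
  have hc2le : (Finset.powersetCard 2 f).card ≤ P.card :=
    Finset.card_le_card (Finset.powersetCard_mono (Finset.subset_univ f))
  have htaken : ∑ e ∈ P.filter (fun e => e ⊆ f), (1:ℝ)/(((procStep f e).card:ℝ)+1)
      = ((f.card.choose 2 : ℕ) : ℝ) * ((1:ℝ) / (((f.card - 2 : ℕ) : ℝ) + 1)) := by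
    rw [filter_subset_eq]
    rw [Finset.sum_congr rfl (fun e he => ?_), Finset.sum_const,
      Finset.card_powersetCard, nsmul_eq_mul]
    rw [Finset.mem_powersetCard] at he
    rw [procStep, if_pos he.1, Finset.card_sdiff_of_subset he.1, he.2]
  have huntaken : ∑ e ∈ P.filter (fun e => ¬ e ⊆ f), (1:ℝ)/(((procStep f e).card:ℝ)+1)
      = ((P.card - f.card.choose 2 : ℕ) : ℝ) * ((1:ℝ) / ((f.card : ℝ) + 1)) := by
    rw [Finset.sum_congr rfl (fun e he => ?_), Finset.sum_const, nsmul_eq_mul]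
    · congr 2
      have := Finset.card_filter_add_card_filter_not (s := P) (p := fun e => e ⊆ f)
      rw [filter_subset_eq, Finset.card_powersetCard] at this
      omega
    · rw [Finset.mem_filter] at he
      rw [procStep, if_neg he.2]
  rw [htaken, huntaken]
  rcases le_or_gt f.card 1 with hF | hF
  · have hc0 : f.card.choose 2 = 0 := Nat.choose_eq_zero_of_lt (by omega)
    rw [hc0]
    push_cast
    rw [Nat.sub_zero]
    nlinarith [one_div_nonneg.mpr (by positivity : (0:ℝ) ≤ ((f.card - 2 : ℕ) : ℝ) + 1)]
  · have h2F : 2 ≤ f.card := hF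
    rw [Nat.cast_sub (le_trans (by rw [← Finset.card_powersetCard]) hc2le)]
    · rw [Nat.cast_sub h2F, Nat.cast_choose_two]
      have hx2 : (2:ℝ) ≤ (f.card : ℝ) := by exact_mod_cast h2F
      set x := (f.card : ℝ) with hx
      have h2 : (0:ℝ) < x + 1 := by linarith
      have h3 : (0:ℝ) < x - 1 := by linarith
      push_cast
      have hxx : x - 2 + 1 = x - 1 := by ring
      rw [hxx]
      have hfrac : x * (x - 1) / 2 * (1 / (x - 1)) = x / 2 := by
        field_simp
      rw [hfrac]
      have hfrac2 : (((P.card : ℕ) : ℝ) - x * (x - 1) / 2) * (1 / (x + 1))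
          = ((P.card : ℕ) : ℝ) * (1/(x+1)) - x*(x-1)/2 * (1/(x+1)) := by ring
      rw [hfrac2]
      have hmain : x/2 - x*(x-1)/2 * (1/(x+1)) = x/(x+1) := by
        field_simp
        ring
      have hle1 : x/(x+1) ≤ 1 := (div_le_one h2).mpr (by linarith)
      linarith
end EdgeSum

lemma sum_piFinset_snoc {m M : ℕ} (P : Finset (Finset (Fin m)))
    (φ : (Fin (M+1) → Finset (Fin m)) → ℝ) :
    ∑ E ∈ Fintype.piFinset (fun _ : Fin (M+1) => P), φ E
      = ∑ E' ∈ Fintype.piFinset (fun _ : Fin M => P), ∑ x ∈ P, φ (Fin.snoc E' x) := by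
  classical
  rw [← Finset.sum_product']
  refine Finset.sum_nbij' (i := fun E => (Fin.init E, E (Fin.last M)))
    (j := fun p => Fin.snoc p.1 p.2) ?_ ?_ ?_ ?_ ?_
  · intro E hE
    rw [Fintype.mem_piFinset] at hE
    rw [Finset.mem_product]
    exact ⟨Fintype.mem_piFinset.mpr fun j => hE _, hE _⟩
  · intro p hp
    rw [Finset.mem_product] at hp
    rw [Fintype.mem_piFinset]
    intro j
    rcases Fin.eq_castSucc_or_eq_last j with ⟨j', rfl⟩ | rfl
    · show Fin.snoc (α := fun _ => Finset (Fin m)) p.1 p.2 j'.castSucc ∈ P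
      rw [Fin.snoc_castSucc]
      exact Fintype.mem_piFinset.mp hp.1 j'
    · show Fin.snoc (α := fun _ => Finset (Fin m)) p.1 p.2 (Fin.last M) ∈ P
      rw [Fin.snoc_last]
      exact hp.2
  · intro E _
    exact Fin.snoc_init_self E
  · intro p _
    simp [Fin.init_snoc, Fin.snoc_last]
  · intro E _
    rw [Fin.snoc_init_self E]

lemma proc_sum {m : ℕ} (M : ℕ) (f : Finset (Fin m)) :
    ((Finset.powersetCard 2 (Finset.univ : Finset (Fin m))).card : ℝ)
        * ∑ E ∈ Fintype.piFinset
            (fun _ : Fin M => Finset.powersetCard 2 (Finset.univ : Finset (Fin m))),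
            (1 : ℝ) / (((procF M E f).card : ℝ) + 1)
      ≤ ((Finset.powersetCard 2 (Finset.univ : Finset (Fin m))).card : ℝ)^(M+1)
          * (1 / ((f.card : ℝ) + 1))
        + M * ((Finset.powersetCard 2 (Finset.univ : Finset (Fin m))).card : ℝ)^M := by
  induction M generalizing f with
  | zero =>
    have hsingle : (Fintype.piFinset
        (fun _ : Fin 0 => Finset.powersetCard 2 (Finset.univ : Finset (Fin m))))
        = {fun j => j.elim0} := by
      ext E
      simp only [Fintype.mem_piFinset, Finset.mem_singleton]
      constructor
      · intro _
        exact funext fun j => j.elim0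
      · intro _ j
        exact j.elim0
    rw [hsingle, Finset.sum_singleton]
    simp [procF]
  | succ M ih =>
    set P := Finset.powersetCard 2 (Finset.univ : Finset (Fin m)) with hPdef
    set Pc := (P.card : ℝ) with hPc
    have hPc0 : 0 ≤ Pc := Nat.cast_nonneg _
    rw [sum_piFinset_snoc]
    have hinner : ∀ E' ∈ Fintype.piFinset (fun _ : Fin M => P),
        ∑ x ∈ P, (1:ℝ) / (((procF (M+1) (Fin.snoc E' x) f).card : ℝ) + 1)
          ≤ Pc * ((1:ℝ) / (((procF M E' f).card : ℝ) + 1)) + 1 := by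
      intro E' _
      have heq : ∀ x, procF (M+1) (Fin.snoc E' x) f = procStep (procF M E' f) x := by
        intro x
        simp only [procF, Fin.snoc_castSucc, Fin.snoc_last]
      rw [Finset.sum_congr rfl fun x _ => by rw [heq x]]
      exact edge_sum (procF M E' f)
    have hsum1 : ∑ E' ∈ Fintype.piFinset (fun _ : Fin M => P),
        ∑ x ∈ P, (1:ℝ) / (((procF (M+1) (Fin.snoc E' x) f).card : ℝ) + 1)
        ≤ Pc * (∑ E' ∈ Fintype.piFinset (fun _ : Fin M => P),
            (1:ℝ) / (((procF M E' f).card : ℝ) + 1)) + Pc ^ M := by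
    -- card of piFinset = Pc ^ M
      have hcard : ((Fintype.piFinset (fun _ : Fin M => P)).card : ℝ) = Pc ^ M := by
        rw [Fintype.card_piFinset]
        push_cast
        rw [Finset.prod_const, Finset.card_univ, Fintype.card_fin]
      calc ∑ E' ∈ Fintype.piFinset (fun _ : Fin M => P), ∑ x ∈ P,
            (1:ℝ) / (((procF (M+1) (Fin.snoc E' x) f).card : ℝ) + 1)
          ≤ ∑ E' ∈ Fintype.piFinset (fun _ : Fin M => P),
            (Pc * ((1:ℝ) / (((procF M E' f).card : ℝ) + 1)) + 1) :=
            Finset.sum_le_sum hinner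
        _ = Pc * (∑ E' ∈ Fintype.piFinset (fun _ : Fin M => P),
            (1:ℝ) / (((procF M E' f).card : ℝ) + 1)) + Pc ^ M := by
            rw [Finset.sum_add_distrib, Finset.sum_const, ← Finset.mul_sum, nsmul_eq_mul,
              mul_one, hcard]
    have hIH := ih f
    calc Pc * ∑ E' ∈ Fintype.piFinset (fun _ : Fin M => P), ∑ x ∈ P,
          (1:ℝ) / (((procF (M+1) (Fin.snoc E' x) f).card : ℝ) + 1)
        ≤ Pc * (Pc * (∑ E' ∈ Fintype.piFinset (fun _ : Fin M => P),
            (1:ℝ) / (((procF M E' f).card : ℝ) + 1)) + Pc ^ M) :=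
          mul_le_mul_of_nonneg_left hsum1 hPc0
      _ = Pc * (Pc * (∑ E' ∈ Fintype.piFinset (fun _ : Fin M => P),
            (1:ℝ) / (((procF M E' f).card : ℝ) + 1))) + Pc ^ (M+1) := by ring
      _ ≤ Pc * (Pc^(M+1) * (1 / ((f.card : ℝ) + 1)) + M * Pc^M) + Pc ^ (M+1) :=
          add_le_add_left (mul_le_mul_of_nonneg_left hIH hPc0) _
      _ = Pc^(M+1+1) * (1 / ((f.card : ℝ) + 1)) + ((M+1 : ℕ) : ℝ) * Pc^(M+1) := by
          push_cast; ring


section Bridge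

lemma procF_eq {n m : ℕ} (N : Fin n → Finset (Fin m)) :
    ∀ i, (hi : i ≤ n) →
      procF i (fun j => N (Fin.castLE hi j)) Finset.univ
        = Finset.univ \ (seqA N i).biUnion N := by
  intro i
  induction i with
  | zero => intro _; simp [procF, seqA]
  | succ i ih =>
    intro hi
    have hin : i < n := hi
    have hE1 : (fun j : Fin i => N (Fin.castLE hi j.castSucc))
        = fun j : Fin i => N (Fin.castLE (le_of_lt hin) j) := by
      funext j
      exact congrArg N (Fin.ext rfl)
    have hE2 : N (Fin.castLE hi (Fin.last i)) = N ⟨i, hin⟩ :=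
      congrArg N (Fin.ext rfl)
    show procStep (procF i (fun j => N (Fin.castLE hi j.castSucc)) Finset.univ)
        (N (Fin.castLE hi (Fin.last i))) = _
    rw [hE1, hE2, ih (le_of_lt hin), procStep]
    by_cases hdis : Disjoint (N ⟨i, hin⟩) ((seqA N i).biUnion N)
    · rw [if_pos (Finset.subset_sdiff.mpr ⟨Finset.subset_univ _, hdis⟩)]
      have hA : seqA N (i+1) = insert ⟨i, hin⟩ (seqA N i) := by
        rw [seqA, dif_pos hin, if_pos hdis]
      rw [hA]
      ext x
      simp only [Finset.mem_sdiff, Finset.mem_univ, true_and, Finset.biUnion_insert,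
        Finset.mem_union]
      tauto
    · rw [if_neg (fun hc => hdis (Finset.subset_sdiff.mp hc).2)]
      have hA : seqA N (i+1) = seqA N i := by
        rw [seqA, dif_pos hin, if_neg hdis]
      rw [hA]

lemma procF_card {n : ℕ} (N : Fin n → Finset (Fin n)) (h2 : ∀ i, (N i).card = 2) :
    (procF n N Finset.univ).card + 2 * (seqA N n).card = n := by
  have hbr := procF_eq N n (le_refl n)
  have hfun : (fun j => N (Fin.castLE (le_refl n) j)) = N := by
    funext j
    exact congrArg N (Fin.ext rfl)
  rw [hfun] at hbr
  have hcovle : ((seqA N n).biUnion N).card ≤ n := by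
    calc ((seqA N n).biUnion N).card ≤ (Finset.univ : Finset (Fin n)).card :=
          Finset.card_le_univ _
      _ = n := by rw [Finset.card_univ, Fintype.card_fin]
  rw [hbr, Finset.card_sdiff_of_subset (Finset.subset_univ _), Finset.card_univ, Fintype.card_fin]
  have := card_cov_seqA N h2 n
  omega

lemma lrr_eq_piFinset (n : ℕ) :
    lrrGraphs n 2 = Fintype.piFinset
      (fun _ : Fin n => Finset.powersetCard 2 (Finset.univ : Finset (Fin n))) := by
  ext N
  simp [lrrGraphs, Fintype.mem_piFinset, Finset.mem_powersetCard_univ]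

set_option maxHeartbeats 1000000 in
lemma main_exp {n : ℕ} (hn : 2 ≤ n) (k : ℕ) :
    lrrExp n 2 (fun N => (((greedy N k).biUnion N).card : ℝ))
      ≤ (k : ℝ) + (n : ℝ)/3 + 1 := by
  classical
  set P := Finset.powersetCard 2 (Finset.univ : Finset (Fin n)) with hPdef
  set L := lrrGraphs n 2 with hLdef
  have hL : L = Fintype.piFinset (fun _ : Fin n => P) := lrr_eq_piFinset n
  have hPcnat : P.card = n.choose 2 := by
    rw [hPdef, Finset.card_powersetCard, Finset.card_univ, Fintype.card_fin]
  have hPc1 : 1 ≤ P.card := by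
    rw [hPcnat]
    exact Nat.choose_pos hn
  have hPcpos : (0:ℝ) < (P.card : ℝ) := by exact_mod_cast hPc1
  have hLcard : (L.card : ℝ) = ((P.card : ℝ))^n := by
    rw [hL, Fintype.card_piFinset]
    push_cast
    rw [Finset.prod_const, Finset.card_univ, Fintype.card_fin]
  have hc0 : (0:ℝ) < (L.card : ℝ) := by
    rw [hLcard]
    positivity
  set c := (L.card : ℝ) with hc
  -- members have degree two
  have hmem2 : ∀ N ∈ L, ∀ i, (N i).card = 2 := by
    intro N hN
    rw [hLdef, lrrGraphs, Finset.mem_filter] at hN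
    exact hN.2
  -- deterministic bound
  have hdet : ∀ N ∈ L, (((greedy N k).biUnion N).card : ℝ)
      ≤ (k : ℝ) + ((n : ℝ) - ((procF n N Finset.univ).card : ℝ))/2 := by
    intro N hN
    have h1 := det_main N (hmem2 N hN) k
    have h2 := procF_card N (hmem2 N hN)
    have h1' : (((greedy N k).biUnion N).card : ℝ) ≤ (k : ℝ) + ((seqA N n).card : ℝ) := by
      exact_mod_cast h1
    have h2' : ((procF n N Finset.univ).card : ℝ) + 2 * ((seqA N n).card : ℝ) = (n : ℝ) := by
      exact_mod_cast h2
    linarith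
  set t := ∑ N ∈ L, ((procF n N Finset.univ).card : ℝ) with ht
  have hS1 : ∑ N ∈ L, (((greedy N k).biUnion N).card : ℝ)
      ≤ c * (k : ℝ) + (c * (n : ℝ) - t)/2 := by
    calc ∑ N ∈ L, (((greedy N k).biUnion N).card : ℝ)
        ≤ ∑ N ∈ L, ((k : ℝ) + ((n : ℝ) - ((procF n N Finset.univ).card : ℝ))/2) :=
          Finset.sum_le_sum hdet
      _ = c * (k : ℝ) + (c * (n : ℝ) - t)/2 := by
          rw [Finset.sum_add_distrib, Finset.sum_const, ← Finset.sum_div,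
            Finset.sum_sub_distrib, Finset.sum_const, nsmul_eq_mul, nsmul_eq_mul, ← ht]
  -- bound on sum of 1/(F+1)
  set s : ℝ := 1/((n:ℝ)+1) + 2/((n:ℝ)-1) with hs
  have hn2 : (2:ℝ) ≤ (n:ℝ) := by exact_mod_cast hn
  have hnm1 : (0:ℝ) < (n:ℝ) - 1 := by linarith
  have hnp1 : (0:ℝ) < (n:ℝ) + 1 := by linarith
  have hspos : 0 < s := by
    rw [hs]
    positivity
  have hPcval : (P.card : ℝ) = (n:ℝ) * ((n:ℝ)-1)/2 := by
    rw [hPcnat, Nat.cast_choose_two]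
  have hsumh : ∑ N ∈ L, (1:ℝ)/(((procF n N Finset.univ).card : ℝ) + 1) ≤ c * s := by
    have hps := proc_sum (m := n) n (Finset.univ : Finset (Fin n))
    rw [Finset.card_univ, Fintype.card_fin] at hps
    have hdiv : ∑ E ∈ Fintype.piFinset (fun _ : Fin n => P),
        (1:ℝ)/(((procF n E Finset.univ).card : ℝ) + 1)
        ≤ (((P.card : ℝ))^(n+1) * (1/((n:ℝ)+1)) + (n:ℝ) * ((P.card : ℝ))^n)/(P.card : ℝ) := by
      rw [le_div_iff₀ hPcpos, mul_comm]
      exact hps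
    have hrhs : (((P.card : ℝ))^(n+1) * (1/((n:ℝ)+1)) + (n:ℝ) * ((P.card : ℝ))^n)/(P.card : ℝ)
        ≤ ((P.card : ℝ))^n * s := by
      rw [div_le_iff₀ hPcpos, hs]
      have hrw : (n:ℝ) * ((P.card : ℝ))^n = (2/((n:ℝ)-1)) * ((P.card : ℝ))^n * (P.card : ℝ) := by
        rw [hPcval]
        field_simp
      apply le_of_eq
      rw [hrw]
      ring
    calc ∑ N ∈ L, (1:ℝ)/(((procF n N Finset.univ).card : ℝ) + 1)
        = ∑ E ∈ Fintype.piFinset (fun _ : Fin n => P),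
          (1:ℝ)/(((procF n E Finset.univ).card : ℝ) + 1) := by rw [hL]
      _ ≤ ((P.card : ℝ))^n * s := le_trans hdiv hrhs
      _ = c * s := by rw [hLcard]
  -- Cauchy–Schwarz
  have hCS : c^2 ≤ (∑ N ∈ L, (((procF n N Finset.univ).card : ℝ) + 1))
      * (∑ N ∈ L, (1:ℝ)/(((procF n N Finset.univ).card : ℝ) + 1)) := by
    have h := Finset.sum_mul_sq_le_sq_mul_sq L
      (fun N => Real.sqrt (((procF n N Finset.univ).card : ℝ) + 1))
      (fun N => 1 / Real.sqrt (((procF n N Finset.univ).card : ℝ) + 1))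
    have hpos : ∀ N : Fin n → Finset (Fin n),
        (0:ℝ) < ((procF n N Finset.univ).card : ℝ) + 1 := by
      intro N
      positivity
    have h1 : ∀ N ∈ L, Real.sqrt (((procF n N Finset.univ).card : ℝ) + 1)
        * (1 / Real.sqrt (((procF n N Finset.univ).card : ℝ) + 1)) = 1 := by
      intro N _
      rw [mul_one_div, div_self (Real.sqrt_ne_zero'.mpr (hpos N))]
    have h2 : ∀ N ∈ L, (Real.sqrt (((procF n N Finset.univ).card : ℝ) + 1))^2
        = ((procF n N Finset.univ).card : ℝ) + 1 := by
      intro N _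
      exact Real.sq_sqrt (le_of_lt (hpos N))
    have h3 : ∀ N ∈ L, (1 / Real.sqrt (((procF n N Finset.univ).card : ℝ) + 1))^2
        = 1/(((procF n N Finset.univ).card : ℝ) + 1) := by
      intro N _
      rw [div_pow, one_pow, Real.sq_sqrt (le_of_lt (hpos N))]
    rw [Finset.sum_congr rfl h1, Finset.sum_congr rfl h2, Finset.sum_congr rfl h3,
      Finset.sum_const, nsmul_eq_mul, mul_one] at h
    exact h
  have hsum_nonneg : 0 ≤ ∑ N ∈ L, (((procF n N Finset.univ).card : ℝ) + 1) :=
    Finset.sum_nonneg fun N _ => by positivity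
  have hFp1 : ∑ N ∈ L, (((procF n N Finset.univ).card : ℝ) + 1) = t + c := by
    rw [Finset.sum_add_distrib, Finset.sum_const, nsmul_eq_mul, mul_one, ← ht]
  have hcs2 : c^2 ≤ (t + c) * (c * s) := by
    calc c^2 ≤ (∑ N ∈ L, (((procF n N Finset.univ).card : ℝ) + 1))
        * (∑ N ∈ L, (1:ℝ)/(((procF n N Finset.univ).card : ℝ) + 1)) := hCS
      _ ≤ (∑ N ∈ L, (((procF n N Finset.univ).card : ℝ) + 1)) * (c * s) :=
          mul_le_mul_of_nonneg_left hsumh hsum_nonneg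
      _ = (t + c) * (c * s) := by rw [hFp1]
  have htlb : c/s - c ≤ t := by
    have h1 : c ≤ (t + c) * s := by
      have := hcs2
      have hc2 : c^2 = c * c := sq c
      nlinarith
    rw [div_sub' (ne_of_gt hspos), div_le_iff₀ hspos]
    nlinarith
  -- final arithmetic
  have hinv : ((n:ℝ)*(n:ℝ) - 1)/(3*(n:ℝ)+1) ≤ 1/s := by
    have hseq : s = (3*(n:ℝ)+1)/(((n:ℝ)+1)*((n:ℝ)-1)) := by
      rw [hs]
      field_simp
      ring
    rw [hseq, one_div_div]
    rw [div_le_div_iff₀ (by linarith) (by linarith)]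
    nlinarith
  have hfin : c * (k : ℝ) + (c * (n : ℝ) - t)/2 ≤ ((k : ℝ) + (n : ℝ)/3 + 1) * c := by
    have h1 : c * (n : ℝ) - t ≤ c * ((n:ℝ) + 1 - 1/s) := by
      have : c * (1/s) ≤ c/s := by rw [mul_one_div]
      nlinarith
    have h2 : (n:ℝ) + 1 - 1/s ≤ 2*(n:ℝ)/3 + 2 := by
      have h3 : (n:ℝ)/3 - 1 ≤ ((n:ℝ)*(n:ℝ) - 1)/(3*(n:ℝ)+1) := by
        rw [le_div_iff₀ (by linarith)]
        nlinarith
      nlinarith [hinv]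
    nlinarith
  rw [lrrExp, ← hLdef, ← hc, div_le_iff₀ hc0]
  exact le_trans hS1 hfin

end Bridge

/-- **Lemma 4.3 (upper bound for Greedy, `d = 2`).** Under `LRR(n, 2)`, there
is a sequence `ε_n → 0` such that for every `n` and every `k > n/3`,
`E[|N(G_k)|] ≤ (1 + ε_n)·(n/3 + k)`. -/
theorem greedy_upper_bound_degree_two :
    ∃ ε : ℕ → ℝ, Filter.Tendsto ε Filter.atTop (nhds 0) ∧
      ∀ n k : ℕ, (k : ℝ) > (n : ℝ) / 3 →
        lrrExp n 2 (fun N => (((greedy N k).biUnion N).card : ℝ)) ≤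
          (1 + ε n) * ((n : ℝ) / 3 + k) := by
  refine ⟨fun n => 3 * (1/((n:ℝ)+1)), ?_, ?_⟩
  · have h := tendsto_one_div_add_atTop_nhds_zero_nat.const_mul (3:ℝ)
    simpa using h
  · intro n k hk
    have hn3 : (0:ℝ) ≤ (n:ℝ)/3 := by positivity
    have hk0 : (0:ℝ) < (k:ℝ) := lt_of_le_of_lt hn3 hk
    have hk1 : (1:ℝ) ≤ (k:ℝ) := by
      have : 0 < k := by exact_mod_cast hk0
      exact_mod_cast this
    have hnp1 : (0:ℝ) < (n:ℝ)+1 := by positivity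
    have hrhs : (k:ℝ) + (n:ℝ)/3 + 1 ≤ (1 + 3*(1/((n:ℝ)+1))) * ((n:ℝ)/3 + (k:ℝ)) := by
      have hterm : 3 * (1/((n:ℝ)+1)) * ((n:ℝ)/3 + (k:ℝ)) = ((n:ℝ) + 3*(k:ℝ))/((n:ℝ)+1) := by
        field_simp
      have h1 : (1:ℝ) ≤ ((n:ℝ) + 3*(k:ℝ))/((n:ℝ)+1) := by
        rw [le_div_iff₀ hnp1]
        linarith
      have hexp : (1 + 3*(1/((n:ℝ)+1))) * ((n:ℝ)/3 + (k:ℝ))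
          = ((n:ℝ)/3 + (k:ℝ)) + 3*(1/((n:ℝ)+1)) * ((n:ℝ)/3 + (k:ℝ)) := by ring
      rw [hexp, hterm]
      linarith
    rcases lt_or_ge n 2 with hn | hn
    · have hzero : lrrExp n 2 (fun N => (((greedy N k).biUnion N).card : ℝ)) = 0 := by
        interval_cases n
        · rw [lrrExp]
          have hz : ∀ N ∈ lrrGraphs 0 2, (((greedy N k).biUnion N).card : ℝ) = 0 := by
            intro N _
            have he : ((greedy N k).biUnion N) = ∅ :=
              Finset.eq_empty_of_forall_notMem (fun x => x.elim0)
            rw [he]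
            simp
          rw [Finset.sum_eq_zero hz, zero_div]
        · have hempty : lrrGraphs 1 2 = ∅ := by
            rw [Finset.eq_empty_iff_forall_notMem]
            intro N hN
            rw [lrrGraphs, Finset.mem_filter] at hN
            have h2 := hN.2 0
            have hle : (N 0).card ≤ 1 := by
              calc (N 0).card ≤ (Finset.univ : Finset (Fin 1)).card := Finset.card_le_univ _
                _ = 1 := by rw [Finset.card_univ, Fintype.card_fin]
            omega
          rw [lrrExp, hempty]
          simp
      rw [hzero]
      have h1 : (0:ℝ) ≤ 1 + 3*(1/((n:ℝ)+1)) := by positivity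
      have h2 : (0:ℝ) ≤ (n:ℝ)/3 + (k:ℝ) := by positivity
      exact mul_nonneg h1 h2
    · exact le_trans (main_exp hn k) (by linarith [hrhs])
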